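/- For every α ∈ (0,1) and every n > 0, as x₀ → +∞, ∫_{x₀^α}^{x₀/2} (1 − t/x₀)^{−(d−1)/2} ∫_{|x'| < ε (x₀−t)^{1/2}} | exp( −½ x'·Q x' + E(x', x₀ − t) ) | · | ν( t, x'/(x₀−t)^{1/2} ) | dx' dt = O(x₀^{−n}). -/

import Mathlib

open Metric MeasureTheory Filter Asymptotics
open scoped Topology

/-- truncation in `t`: for `α ∈ (0,1)` and `n > 0`,
`∫_{x₀^α}^{x₀/2} (1-t/x₀)^{-(d-1)/2} ∫_{|x'|<ε√(x₀-t)} |exp(-½x'·Qx' + E(x',x₀-t))| |ν(t,x'/√(x₀-t))| dx' dt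
 = O(x₀^{-n})` as `x₀ → +∞`. -/
theorem stmt_13 (d : ℕ) (hd : 2 ≤ d) (ε γ : ℝ) (hε : 0 < ε) (hγ : 0 < γ)
    (Q : Matrix (Fin (d - 1)) (Fin (d - 1)) ℝ) (hQsymm : Q.IsSymm) (hQpos : Q.PosDef)
    (hgamQ : ∀ v : EuclideanSpace ℝ (Fin (d - 1)),
      γ * ‖v‖ ^ 2 ≤ ∑ p, ∑ q, Q p q * v p * v q)
    (ν : ℝ × EuclideanSpace ℝ (Fin (d - 1)) → ℂ)
    (hν : ContinuousOn ν {q : ℝ × EuclideanSpace ℝ (Fin (d - 1)) | ‖q.2‖ ≤ ε})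
    (hνdecay : ∀ N : ℝ, 0 < N → ∃ C : ℝ, ∀ (t : ℝ) (ξ : EuclideanSpace ℝ (Fin (d - 1))),
      ‖ξ‖ ≤ ε → ‖ν (t, ξ)‖ ≤ C * (1 + |t|) ^ (-N))
    (Efun : EuclideanSpace ℝ (Fin (d - 1)) → ℝ → ℂ)
    (hE : ∀ τ : ℝ, 0 < τ → ∀ x' : EuclideanSpace ℝ (Fin (d - 1)),
      ‖x'‖ < ε * Real.sqrt τ →
      -(1 / 2) * (∑ p, ∑ q, Q p q * x' p * x' q) + (Efun x' τ).re ≤ -(γ / 4) * ‖x'‖ ^ 2)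
    (α n : ℝ) (hα0 : 0 < α) (hα1 : α < 1) (hn : 0 < n) :
    (fun x₀ : ℝ =>
      ∫ t in Set.Ioc (x₀ ^ α) (x₀ / 2),
        (1 - t / x₀) ^ (-((d : ℝ) - 1) / 2) *
          ∫ x' in ball (0 : EuclideanSpace ℝ (Fin (d - 1))) (ε * Real.sqrt (x₀ - t)),
            ‖Complex.exp (-(1 / 2 : ℂ) * (∑ p, ∑ q, (Q p q : ℂ) * x' p * x' q) +
                Efun x' (x₀ - t))‖ *
              ‖ν (t, (Real.sqrt (x₀ - t))⁻¹ • x')‖)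
      =O[atTop] fun x₀ : ℝ => x₀ ^ (-n) := by
  classical
  obtain ⟨C, hC⟩ := hνdecay ((n + d) / α) (by positivity)
  set N : ℝ := (n + d) / α with hN
  have hαN : α * N = n + d := by
    rw [hN]; field_simp
  set C' : ℝ := max C 0 with hC'
  have hC'0 : (0:ℝ) ≤ C' := le_max_right _ _
  set c : ℝ := (volume (ball (0 : EuclideanSpace ℝ (Fin (d - 1))) 1)).toReal with hc
  have hc0 : (0:ℝ) ≤ c := ENNReal.toReal_nonneg
  have he0 : (0:ℝ) ≤ (2:ℝ) ^ (((d:ℝ) - 1) / 2) := Real.rpow_nonneg (by norm_num) _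
  rw [isBigO_iff]
  refine ⟨2 ^ (((d:ℝ) - 1) / 2) * C' * c * (max ε 1) ^ (d - 1), ?_⟩
  filter_upwards [eventually_ge_atTop (1:ℝ)] with x₀ hx₀
  have hx₀0 : (0:ℝ) < x₀ := lt_of_lt_of_le one_pos hx₀
  -- per-`t` bound
  set B : ℝ := 2 ^ (((d:ℝ) - 1) / 2) *
      (C' * x₀ ^ (-(α * N)) * ((ε * Real.sqrt x₀) ^ (d - 1) * c)) with hB
  have key : ∀ t ∈ Set.Ioc (x₀ ^ α) (x₀ / 2),
      ‖(1 - t / x₀) ^ (-((d : ℝ) - 1) / 2) *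
        ∫ x' in ball (0 : EuclideanSpace ℝ (Fin (d - 1))) (ε * Real.sqrt (x₀ - t)),
          ‖Complex.exp (-(1 / 2 : ℂ) * (∑ p, ∑ q, (Q p q : ℂ) * x' p * x' q) +
              Efun x' (x₀ - t))‖ *
            ‖ν (t, (Real.sqrt (x₀ - t))⁻¹ • x')‖‖ ≤ B := by
    intro t ht
    obtain ⟨ht1, ht2⟩ := ht
    have hxα1 : (1:ℝ) ≤ x₀ ^ α := Real.one_le_rpow hx₀ hα0.le
    have ht0 : (0:ℝ) < t := by nlinarith [lt_of_le_of_lt hxα1 ht1]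
    have hτ : (0:ℝ) < x₀ - t := by linarith
    have hsq : (0:ℝ) < Real.sqrt (x₀ - t) := Real.sqrt_pos.2 hτ
    -- bound on the prefactor
    have hbase : (1:ℝ) / 2 ≤ 1 - t / x₀ := by
      have : t / x₀ ≤ 1 / 2 := by rw [div_le_iff₀ hx₀0]; linarith
      linarith
    have hpre : (1 - t / x₀) ^ (-((d : ℝ) - 1) / 2) ≤ 2 ^ (((d:ℝ) - 1) / 2) := by
      have h1 : (1 - t / x₀) ^ (-((d : ℝ) - 1) / 2) ≤ ((1:ℝ)/2) ^ (-((d : ℝ) - 1) / 2) := by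
        apply Real.rpow_le_rpow_of_nonpos (by norm_num) hbase
        have : (1:ℝ) ≤ (d:ℝ) := by exact_mod_cast Nat.one_le_of_lt hd
        rw [neg_div]
        linarith
      have h2 : ((1:ℝ)/2) ^ (-((d : ℝ) - 1) / 2) = 2 ^ (((d:ℝ) - 1) / 2) := by
        rw [neg_div, one_div, Real.inv_rpow (by norm_num : (0:ℝ) ≤ 2),
          ← Real.rpow_neg (by norm_num : (0:ℝ) ≤ 2), neg_neg]
      rw [h2] at h1; exact h1
    have hpre0 : (0:ℝ) ≤ (1 - t / x₀) ^ (-((d : ℝ) - 1) / 2) :=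
      Real.rpow_nonneg (by linarith) _
    -- bound on the inner integral
    have hinner : ‖∫ x' in ball (0 : EuclideanSpace ℝ (Fin (d - 1))) (ε * Real.sqrt (x₀ - t)),
          ‖Complex.exp (-(1 / 2 : ℂ) * (∑ p, ∑ q, (Q p q : ℂ) * x' p * x' q) +
              Efun x' (x₀ - t))‖ *
            ‖ν (t, (Real.sqrt (x₀ - t))⁻¹ • x')‖‖ ≤
        C' * x₀ ^ (-(α * N)) * ((ε * Real.sqrt x₀) ^ (d - 1) * c) := by
      have hrad : (0:ℝ) < ε * Real.sqrt (x₀ - t) := by positivity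
      have hbd : ∀ x' ∈ ball (0 : EuclideanSpace ℝ (Fin (d - 1))) (ε * Real.sqrt (x₀ - t)),
          ‖‖Complex.exp (-(1 / 2 : ℂ) * (∑ p, ∑ q, (Q p q : ℂ) * x' p * x' q) +
              Efun x' (x₀ - t))‖ *
            ‖ν (t, (Real.sqrt (x₀ - t))⁻¹ • x')‖‖ ≤ C' * x₀ ^ (-(α * N)) := by
        intro x' hx'
        rw [mem_ball_zero_iff] at hx'
        -- exponential factor is ≤ 1
        have hre : (-(1 / 2 : ℂ) * (∑ p, ∑ q, (Q p q : ℂ) * x' p * x' q) +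
            Efun x' (x₀ - t)).re =
            -(1 / 2) * (∑ p, ∑ q, Q p q * x' p * x' q) + (Efun x' (x₀ - t)).re := by
          have : -(1 / 2 : ℂ) * (∑ p, ∑ q, (Q p q : ℂ) * x' p * x' q) =
              ((-(1 / 2) * (∑ p, ∑ q, Q p q * x' p * x' q) : ℝ) : ℂ) := by
            push_cast; ring
          rw [Complex.add_re, this, Complex.ofReal_re]
        have hexp : ‖Complex.exp (-(1 / 2 : ℂ) * (∑ p, ∑ q, (Q p q : ℂ) * x' p * x' q) +
            Efun x' (x₀ - t))‖ ≤ 1 := by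
          rw [Complex.norm_exp, hre]
          have h1 := hE (x₀ - t) hτ x' hx'
          calc Real.exp (-(1 / 2) * (∑ p, ∑ q, Q p q * x' p * x' q) + (Efun x' (x₀ - t)).re)
              ≤ Real.exp 0 := Real.exp_le_exp.2 (by nlinarith [sq_nonneg ‖x'‖])
            _ = 1 := Real.exp_zero
        -- ν factor
        have hξ : ‖(Real.sqrt (x₀ - t))⁻¹ • x'‖ ≤ ε := by
          rw [norm_smul, norm_inv, Real.norm_eq_abs, abs_of_pos hsq,
            inv_mul_le_iff₀ hsq]
          calc ‖x'‖ ≤ ε * Real.sqrt (x₀ - t) := hx'.le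
            _ = Real.sqrt (x₀ - t) * ε := mul_comm _ _
        have hν1 : ‖ν (t, (Real.sqrt (x₀ - t))⁻¹ • x')‖ ≤ C' * (1 + |t|) ^ (-N) := by
          refine (hC t _ hξ).trans ?_
          exact mul_le_mul_of_nonneg_right (le_max_left _ _) (Real.rpow_nonneg (by positivity) _)
        have hν2 : (1 + |t|) ^ (-N) ≤ x₀ ^ (-(α * N)) := by
          have h1 : x₀ ^ α ≤ 1 + |t| := by
            rw [abs_of_pos ht0]; linarith
          have h2 : (1 + |t|) ^ (-N) ≤ (x₀ ^ α) ^ (-N) :=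
            Real.rpow_le_rpow_of_nonpos (by positivity) h1
              (neg_nonpos.2 (by positivity))
          rwa [← Real.rpow_mul hx₀0.le, mul_neg] at h2
        have hν3 : ‖ν (t, (Real.sqrt (x₀ - t))⁻¹ • x')‖ ≤ C' * x₀ ^ (-(α * N)) :=
          hν1.trans (mul_le_mul_of_nonneg_left hν2 hC'0)
        rw [Real.norm_eq_abs, abs_of_nonneg (by positivity)]
        calc ‖Complex.exp _‖ * ‖ν (t, (Real.sqrt (x₀ - t))⁻¹ • x')‖
            ≤ 1 * (C' * x₀ ^ (-(α * N))) :=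
              mul_le_mul hexp hν3 (norm_nonneg _) zero_le_one
          _ = C' * x₀ ^ (-(α * N)) := one_mul _
      have h := norm_setIntegral_le_of_norm_le_const
        (measure_ball_lt_top (μ := (volume : Measure (EuclideanSpace ℝ (Fin (d - 1))))))
        hbd
      refine h.trans ?_
      have hvol : (volume (ball (0 : EuclideanSpace ℝ (Fin (d - 1)))
          (ε * Real.sqrt (x₀ - t)))).toReal ≤ (ε * Real.sqrt x₀) ^ (d - 1) * c := by
        rw [Measure.addHaar_ball_of_pos volume 0 hrad, ENNReal.toReal_mul,
          ENNReal.toReal_ofReal (by positivity), finrank_euclideanSpace_fin]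
        refine mul_le_mul_of_nonneg_right ?_ hc0
        refine pow_le_pow_left₀ hrad.le ?_ _
        refine mul_le_mul_of_nonneg_left ?_ hε.le
        exact Real.sqrt_le_sqrt (by linarith)
      exact mul_le_mul_of_nonneg_left hvol (by positivity)
    rw [Real.norm_eq_abs, abs_mul, abs_of_nonneg hpre0, hB]
    exact mul_le_mul hpre hinner (abs_nonneg _) he0
  have houter := norm_setIntegral_le_of_norm_le_const (by
      rw [Real.volume_Ioc]; exact ENNReal.ofReal_lt_top) key
  have hvolI : (volume (Set.Ioc (x₀ ^ α) (x₀ / 2))).toReal ≤ x₀ := by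
    rw [Real.volume_Ioc]
    calc (ENNReal.ofReal (x₀ / 2 - x₀ ^ α)).toReal
        ≤ (ENNReal.ofReal x₀).toReal := by
          refine ENNReal.toReal_mono ENNReal.ofReal_ne_top (ENNReal.ofReal_le_ofReal ?_)
          have := Real.rpow_nonneg hx₀0.le α
          linarith
      _ = x₀ := ENNReal.toReal_ofReal hx₀0.le
  have hB0 : (0:ℝ) ≤ B := by
    rw [hB]
    have : (0:ℝ) ≤ x₀ ^ (-(α * N)) := Real.rpow_nonneg hx₀0.le _
    have h2 : (0:ℝ) ≤ (ε * Real.sqrt x₀) ^ (d - 1) := by positivity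
    positivity
  have h1 : ‖∫ t in Set.Ioc (x₀ ^ α) (x₀ / 2),
        (1 - t / x₀) ^ (-((d : ℝ) - 1) / 2) *
          ∫ x' in ball (0 : EuclideanSpace ℝ (Fin (d - 1))) (ε * Real.sqrt (x₀ - t)),
            ‖Complex.exp (-(1 / 2 : ℂ) * (∑ p, ∑ q, (Q p q : ℂ) * x' p * x' q) +
                Efun x' (x₀ - t))‖ *
              ‖ν (t, (Real.sqrt (x₀ - t))⁻¹ • x')‖‖ ≤ B * x₀ :=
    houter.trans (mul_le_mul_of_nonneg_left hvolI hB0)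
  refine h1.trans ?_
  -- final arithmetic
  have hsx : Real.sqrt x₀ ≤ x₀ := by
    have h := Real.sqrt_le_sqrt (show x₀ ≤ x₀ * x₀ by nlinarith)
    rwa [Real.sqrt_mul_self hx₀0.le] at h
  have hεb : ε * Real.sqrt x₀ ≤ max ε 1 * x₀ :=
    mul_le_mul (le_max_left _ _) hsx (Real.sqrt_nonneg _)
      (le_trans zero_le_one (le_max_right _ _))
  have hpowb : (ε * Real.sqrt x₀) ^ (d - 1) ≤ (max ε 1) ^ (d - 1) * x₀ ^ (d - 1) := by
    rw [← mul_pow]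
    exact pow_le_pow_left₀ (by positivity) hεb _
  have hcomb : x₀ ^ (-(α * N)) * x₀ ^ (d - 1 : ℕ) * x₀ = x₀ ^ (-n) := by
    rw [← Real.rpow_natCast x₀ (d - 1)]
    nth_rewrite 3 [← Real.rpow_one x₀]
    rw [← Real.rpow_add hx₀0, ← Real.rpow_add hx₀0]
    congr 1
    rw [hαN]
    have : ((d - 1 : ℕ) : ℝ) = (d : ℝ) - 1 := by
      rw [Nat.cast_sub (by omega)]; norm_num
    rw [this]; ring
  have hnorm : ‖x₀ ^ (-n)‖ = x₀ ^ (-n) := by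
    rw [Real.norm_eq_abs, abs_of_nonneg (Real.rpow_nonneg hx₀0.le _)]
  rw [hnorm, hB]
  calc 2 ^ (((d:ℝ) - 1) / 2) *
        (C' * x₀ ^ (-(α * N)) * ((ε * Real.sqrt x₀) ^ (d - 1) * c)) * x₀
      ≤ 2 ^ (((d:ℝ) - 1) / 2) *
        (C' * x₀ ^ (-(α * N)) * (((max ε 1) ^ (d - 1) * x₀ ^ (d - 1)) * c)) * x₀ := by
        have hx1 : (0:ℝ) ≤ x₀ ^ (-(α * N)) := Real.rpow_nonneg hx₀0.le _
        gcongr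
    _ = 2 ^ (((d:ℝ) - 1) / 2) * C' * c * (max ε 1) ^ (d - 1) *
        (x₀ ^ (-(α * N)) * x₀ ^ (d - 1 : ℕ) * x₀) := by ring
    _ = 2 ^ (((d:ℝ) - 1) / 2) * C' * c * (max ε 1) ^ (d - 1) * x₀ ^ (-n) := by rw [hcomb]
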